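/- Let α,β>0, γ,δ≥0, 0≤q<1, define a,b,c,d via φ±, and assume ab<1. Then the Enaud–Derrida matrices D,E and vectors W,V satisfy the DEHP algebra entrywise: (i) for all i,j≥0, ∑_k (D_{ik}E_{kj} − q E_{ik}D_{kj}) = D_{ij} + E_{ij}; (ii) for all j≥0, ∑_i W_i (αE_{ij} − γD_{ij}) = W_j; (iii) for all i≥0, ∑_j (βD_{ij} − δE_{ij}) V_j = V_i. (All sums have only finitely many nonzero terms since D and E are banded.) -/

import Mathlib

/-- `φ₊(x,y) = (1/(2x))(1-q-x+y + √((1-q-x+y)² + 4xy))`. -/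
noncomputable def phiPlus (q x y : ℝ) : ℝ :=
  (1 / (2 * x)) * (1 - q - x + y + Real.sqrt ((1 - q - x + y) ^ 2 + 4 * x * y))

/-- `φ₋(x,y) = (1/(2x))(1-q-x+y - √((1-q-x+y)² + 4xy))`. -/
noncomputable def phiMinus (q x y : ℝ) : ℝ :=
  (1 / (2 * x)) * (1 - q - x + y - Real.sqrt ((1 - q - x + y) ^ 2 + 4 * x * y))

/-- The finite q-Pochhammer symbol `(z;q)_n = ∏_{j=0}^{n-1} (1 - z qʲ)`. -/
noncomputable def qPoch (z q : ℝ) (n : ℕ) : ℝ := ∏ j ∈ Finset.range n, (1 - z * q ^ j)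

/-- The Enaud–Derrida matrix `D` (entries indexed by `ℤ≥0 × ℤ≥0`). -/
noncomputable def EDmatD (q d : ℝ) (i j : ℕ) : ℝ :=
  if j = i then (1 + d * q ^ i) / (1 - q)
  else if j = i + 1 then (1 - q ^ (i + 1)) / (1 - q)
  else 0

/-- The Enaud–Derrida matrix `E` (entries indexed by `ℤ≥0 × ℤ≥0`). -/
noncomputable def EDmatE (q c d : ℝ) (i j : ℕ) : ℝ :=
  if j = i then (1 + c * q ^ i) / (1 - q)
  else if i = j + 1 then (1 - c * d * q ^ j) / (1 - q)
  else 0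

/-- The Enaud–Derrida row vector `W`, `W_i = aⁱ`. -/
noncomputable def EDvecW (a : ℝ) (i : ℕ) : ℝ := a ^ i

/-- The Enaud–Derrida column vector `V`, `V_i = bⁱ (cd;q)_i/(q;q)_i`. -/
noncomputable def EDvecV (b c d q : ℝ) (i : ℕ) : ℝ := b ^ i * qPoch (c * d) q i / qPoch q q i

/-- Lemma 2.3: the Enaud–Derrida matrices and vectors satisfy the DEHP algebra entrywise. -/
private lemma phi_mul (q x y : ℝ) (hx : 0 < x) (hy : 0 ≤ y) :
    x * phiPlus q x y * phiMinus q x y = -y := by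
  have hr : Real.sqrt ((1 - q - x + y) ^ 2 + 4 * x * y) ^ 2 = (1 - q - x + y) ^ 2 + 4 * x * y :=
    Real.sq_sqrt (by positivity)
  have hx' : x ≠ 0 := hx.ne'
  unfold phiPlus phiMinus
  generalize Real.sqrt ((1 - q - x + y) ^ 2 + 4 * x * y) = s at hr ⊢
  field_simp
  linear_combination (-1)*hr

private lemma phi_one (q x y : ℝ) (hx : 0 < x) (hy : 0 ≤ y) :
    x * (1 + phiPlus q x y) * (1 + phiMinus q x y) = 1 - q := by
  have hr : Real.sqrt ((1 - q - x + y) ^ 2 + 4 * x * y) ^ 2 = (1 - q - x + y) ^ 2 + 4 * x * y :=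
    Real.sq_sqrt (by positivity)
  have hx' : x ≠ 0 := hx.ne'
  unfold phiPlus phiMinus
  generalize Real.sqrt ((1 - q - x + y) ^ 2 + 4 * x * y) = s at hr ⊢
  field_simp
  linear_combination (-1)*hr

private lemma D_diag (q d : ℝ) {i j : ℕ} (h : j = i) : EDmatD q d i j = (1 + d * q ^ i) / (1 - q) := by
  rw [EDmatD, if_pos h]
private lemma D_up (q d : ℝ) {i j : ℕ} (h : j = i + 1) : EDmatD q d i j = (1 - q ^ (i + 1)) / (1 - q) := by
  rw [EDmatD, if_neg (by omega), if_pos h]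
private lemma D_zero (q d : ℝ) {i j : ℕ} (h1 : j ≠ i) (h2 : j ≠ i + 1) : EDmatD q d i j = 0 := by
  rw [EDmatD, if_neg h1, if_neg h2]
private lemma E_diag (q c d : ℝ) {i j : ℕ} (h : j = i) : EDmatE q c d i j = (1 + c * q ^ i) / (1 - q) := by
  rw [EDmatE, if_pos h]
private lemma E_down (q c d : ℝ) {i j : ℕ} (h : i = j + 1) :
    EDmatE q c d i j = (1 - c * d * q ^ j) / (1 - q) := by
  rw [EDmatE, if_neg (by omega), if_pos h]
private lemma E_zero (q c d : ℝ) {i j : ℕ} (h1 : j ≠ i) (h2 : i ≠ j + 1) : EDmatE q c d i j = 0 := by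
  rw [EDmatE, if_neg h1, if_neg h2]

private lemma qPoch_zero (z q : ℝ) : qPoch z q 0 = 1 := Finset.prod_range_zero _
private lemma qPoch_succ (z q : ℝ) (n : ℕ) : qPoch z q (n + 1) = qPoch z q n * (1 - z * q ^ n) :=
  Finset.prod_range_succ _ _
private lemma qPoch_pos (q : ℝ) (hq0 : 0 ≤ q) (hq1 : q < 1) (n : ℕ) : 0 < qPoch q q n := by
  apply Finset.prod_pos
  intro j _
  have : q * q ^ j ≤ q * 1 := by
    apply mul_le_mul_of_nonneg_left (pow_le_one₀ hq0 hq1.le) hq0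
  nlinarith

private lemma tsum_pair {f : ℕ → ℝ} (hf : ∀ k, k ≠ 0 → k ≠ 1 → f k = 0) :
    ∑' k, f k = f 0 + f 1 := by
  rw [tsum_eq_sum (s := {0, 1}) (fun k hk => by
    simp only [Finset.mem_insert, Finset.mem_singleton] at hk
    exact hf k (fun h => hk (Or.inl h)) (fun h => hk (Or.inr h)))]
  rw [Finset.sum_insert (by simp), Finset.sum_singleton]

private lemma tsum_triple {f : ℕ → ℝ} (m : ℕ) (hf : ∀ k, k ≠ m → k ≠ m + 1 → k ≠ m + 2 → f k = 0) :
    ∑' k, f k = f m + f (m + 1) + f (m + 2) := by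
  rw [tsum_eq_sum (s := {m, m + 1, m + 2}) (fun k hk => by
    simp only [Finset.mem_insert, Finset.mem_singleton] at hk
    push_neg at hk
    exact hf k hk.1 hk.2.1 hk.2.2)]
  rw [Finset.sum_insert (by simp only [Finset.mem_insert, Finset.mem_singleton]; omega),
    Finset.sum_insert (by simp only [Finset.mem_singleton]; omega), Finset.sum_singleton, add_assoc]

set_option maxHeartbeats 1000000 in
theorem stmt4 (α β γ δ q : ℝ)
    (hα : 0 < α) (hβ : 0 < β) (hγ : 0 ≤ γ) (hδ : 0 ≤ δ) (hq0 : 0 ≤ q) (hq1 : q < 1)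
    (a b c d : ℝ)
    (ha : a = phiPlus q α γ) (hb : b = phiPlus q β δ)
    (hc : c = phiMinus q α γ) (hd : d = phiMinus q β δ)
    (hab : a * b < 1) :
    (∀ i j : ℕ,
      ∑' k : ℕ, (EDmatD q d i k * EDmatE q c d k j - q * (EDmatE q c d i k * EDmatD q d k j)) =
        EDmatD q d i j + EDmatE q c d i j) ∧
    (∀ j : ℕ,
      ∑' i : ℕ, EDvecW a i * (α * EDmatE q c d i j - γ * EDmatD q d i j) = EDvecW a j) ∧
    (∀ i : ℕ,
      ∑' j : ℕ, (β * EDmatD q d i j - δ * EDmatE q c d i j) * EDvecV b c d q j =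
        EDvecV b c d q i) := by
  have h1q : (1:ℝ) - q ≠ 0 := by intro h; linarith
  have hγ' : γ = -(α * a * c) := by
    have := phi_mul q α γ hα hγ
    rw [← ha, ← hc] at this
    linarith
  have hδ' : δ = -(β * b * d) := by
    have := phi_mul q β δ hβ hδ
    rw [← hb, ← hd] at this
    linarith
  have hKα : α * (1 + a) * (1 + c) = 1 - q := by
    have := phi_one q α γ hα hγ
    rw [← ha, ← hc] at this
    exact this
  have hKβ : β * (1 + b) * (1 + d) = 1 - q := by
    have := phi_one q β δ hβ hδ
    rw [← hb, ← hd] at this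
    exact this
  have hQ : ∀ n, qPoch q q n ≠ 0 := fun n => (qPoch_pos q hq0 hq1 n).ne'
  have hfac : ∀ n : ℕ, (1:ℝ) - q * q ^ n ≠ 0 := by
    intro n
    have : q * q ^ n ≤ q * 1 := mul_le_mul_of_nonneg_left (pow_le_one₀ hq0 hq1.le) hq0
    intro h; nlinarith
  refine ⟨fun i j => ?_, fun j => ?_, fun i => ?_⟩
  · -- Part (i): DE - qED = D + E
    rcases i with _ | m
    · rw [tsum_pair (f := fun k => EDmatD q d 0 k * EDmatE q c d k j -
        q * (EDmatE q c d 0 k * EDmatD q d k j))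
        (fun k h0 h1 => by
          simp only [D_zero q d (show (k:ℕ) ≠ 0 from h0) (show (k:ℕ) ≠ 0 + 1 by omega),
            E_zero q c d (show (k:ℕ) ≠ 0 from h0) (show (0:ℕ) ≠ k + 1 by omega)]
          ring)]
      by_cases hj0 : j = 0
      · subst hj0
        simp (disch := omega) only [D_diag, D_up, D_zero, E_diag, E_down, E_zero]
        field_simp
        ring
      · by_cases hj1 : j = 1
        · subst hj1
          simp (disch := omega) only [D_diag, D_up, D_zero, E_diag, E_down, E_zero]
          field_simp
          ring
        · simp (disch := omega) only [D_diag, D_up, D_zero, E_diag, E_down, E_zero]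
          ring
    · rw [tsum_triple (f := fun k => EDmatD q d (m + 1) k * EDmatE q c d k j -
        q * (EDmatE q c d (m + 1) k * EDmatD q d k j)) m
        (fun k h0 h1 h2 => by
          simp only [D_zero q d (show k ≠ m + 1 from h1) (show k ≠ m + 1 + 1 by omega),
            E_zero q c d (show k ≠ m + 1 from h1) (show m + 1 ≠ k + 1 by omega)]
          ring)]
      by_cases hj0 : j = m
      · subst hj0
        simp (disch := omega) only [D_diag, D_up, D_zero, E_diag, E_down, E_zero]
        field_simp
        ring
      · by_cases hj1 : j = m + 1
        · subst hj1
          simp (disch := omega) only [D_diag, D_up, D_zero, E_diag, E_down, E_zero]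
          field_simp
          ring
        · by_cases hj2 : j = m + 2
          · subst hj2
            simp (disch := omega) only [D_diag, D_up, D_zero, E_diag, E_down, E_zero]
            field_simp
            ring
          · simp (disch := omega) only [D_diag, D_up, D_zero, E_diag, E_down, E_zero]
            ring
  · -- Part (ii): W(αE - γD) = W
    rw [hγ']
    rcases j with _ | n
    · rw [tsum_pair (f := fun i => EDvecW a i * (α * EDmatE q c d i 0 -
        -(α * a * c) * EDmatD q d i 0))
        (fun k h0 h1 => by
          simp only [D_zero q d (show (0:ℕ) ≠ k from (Ne.symm h0)) (show (0:ℕ) ≠ k + 1 by omega),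
            E_zero q c d (show (0:ℕ) ≠ k from (Ne.symm h0)) (show (k:ℕ) ≠ 0 + 1 by omega)]
          ring)]
      simp (disch := omega) only [D_diag, D_up, D_zero, E_diag, E_down, E_zero, EDvecW]
      field_simp
      linear_combination hKα
    · rw [tsum_triple (f := fun i => EDvecW a i * (α * EDmatE q c d i (n + 1) -
        -(α * a * c) * EDmatD q d i (n + 1))) n
        (fun k h0 h1 h2 => by
          simp only [D_zero q d (show n + 1 ≠ k from (Ne.symm h1)) (show n + 1 ≠ k + 1 by omega),
            E_zero q c d (show n + 1 ≠ k from (Ne.symm h1)) (show k ≠ n + 1 + 1 by omega)]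
          ring)]
      simp (disch := omega) only [D_diag, D_up, D_zero, E_diag, E_down, E_zero, EDvecW]
      field_simp
      linear_combination a ^ (n + 1) * hKα
  · -- Part (iii): (βD - δE)V = V
    rw [hδ']
    rcases i with _ | m
    · rw [tsum_pair (f := fun j => (β * EDmatD q d 0 j - -(β * b * d) * EDmatE q c d 0 j) *
        EDvecV b c d q j)
        (fun k h0 h1 => by
          simp only [D_zero q d (show (k:ℕ) ≠ 0 from h0) (show (k:ℕ) ≠ 0 + 1 by omega),
            E_zero q c d (show (k:ℕ) ≠ 0 from h0) (show (0:ℕ) ≠ k + 1 by omega)]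
          ring)]
      simp (disch := omega) only [D_diag, D_up, D_zero, E_diag, E_down, E_zero, EDvecV,
        qPoch_succ, qPoch_zero]
      field_simp
      linear_combination (1 - q) * hKβ
    · rw [tsum_triple (f := fun j => (β * EDmatD q d (m + 1) j -
        -(β * b * d) * EDmatE q c d (m + 1) j) * EDvecV b c d q j) m
        (fun k h0 h1 h2 => by
          simp only [D_zero q d (show k ≠ m + 1 from h1) (show k ≠ m + 1 + 1 by omega),
            E_zero q c d (show k ≠ m + 1 from h1) (show m + 1 ≠ k + 1 by omega)]
          ring)]
      simp (disch := omega) only [D_diag, D_up, D_zero, E_diag, E_down, E_zero, EDvecV,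
        qPoch_succ, pow_succ]
      have h1 : (1:ℝ) - q * q ^ m ≠ 0 := hfac m
      have h2 : (1:ℝ) - q * (q ^ m * q) ≠ 0 := by
        have := hfac (m + 1); rwa [pow_succ] at this
      have hQm := hQ m
      have hβ' : β * (1 + b) * (1 + d) ≠ 0 := by rw [hKβ]; exact h1q
      rw [show (1:ℝ) - q = β * (1 + b) * (1 + d) from hKβ.symm]
      set t := q ^ m
      set P := qPoch (c * d) q m
      set Q := qPoch q q m
      have hb1 : 1 + b ≠ 0 := by intro h; apply hβ'; rw [h]; ring
      have hd1 : 1 + d ≠ 0 := by intro h; apply hβ'; rw [h]; ring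
      have h2' : 1 - t * q ^ 2 ≠ 0 := by intro h; apply h2; linear_combination h
      have h1' : 1 - t * q ≠ 0 := by intro h; apply h1; linear_combination h
      field_simp
      ring
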